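/- Let ζ > 0 and μ ∈ ℂ with |Im μ| < ζ/2, and let u_μ(α) := −Σ_{k∈ℤ} e^{−|k|ζ} · cos(2kμ) · e^{2ikα}/cosh(kζ). Then φ'(μ, ζ/2) + (1/(2π)) · ∫_{−π/2}^{π/2} φ'(β, ζ/2) · u_μ(β) dβ = Σ_{k∈ℤ} e^{2ikμ}/cosh(kζ). Equivalently, the dressed energy ε(μ) = −2·sinh(ζ)·[φ'(μ, ζ/2) + (1/(2π))∫_{−π/2}^{π/2} φ'(β, ζ/2)·u_μ(β) dβ] of a close excitation equals −2π·sinh(ζ)·ρ(μ). -/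

import Mathlib

open Complex MeasureTheory Real



/-- `φ'(ν, γ) = sinh(2γ)/(sin(ν+iγ) sin(ν−iγ))`. -/
noncomputable def phiP (ν : ℂ) (γ : ℝ) : ℂ :=
  Complex.sinh (2 * (γ : ℂ)) /
    (Complex.sin (ν + Complex.I * (γ : ℂ)) * Complex.sin (ν - Complex.I * (γ : ℂ)))

/-- The Fourier-series solution `u_μ(α) = −Σ_{k∈ℤ} e^{−|k|ζ} cos(2kμ) e^{2ikα}/cosh(kζ)`
of the dressing integral equation for a close excitation of rapidity `μ`. -/
noncomputable def uFun (ζ : ℝ) (μ : ℂ) (α : ℝ) : ℂ :=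
  -∑' k : ℤ, (Real.exp (-(|(k : ℝ)|) * ζ) : ℂ) * Complex.cos (2 * k * μ) *
      Complex.exp (2 * Complex.I * k * (α : ℂ)) / Complex.cosh (k * (ζ : ℂ))

/-- The ground-state root density `ρ(μ) = (1/π) Σ_{k∈ℤ} e^{2ikμ}/cosh(kζ)`. -/
noncomputable def rho (ζ : ℝ) (μ : ℂ) : ℂ :=
  (1 / (Real.pi : ℂ)) * ∑' k : ℤ, Complex.exp (2 * Complex.I * k * μ) / Complex.cosh (k * (ζ : ℂ))



theorem sin_mul_sin' (z γ : ℂ) :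
    Complex.sin (z + Complex.I*γ) * Complex.sin (z - Complex.I*γ)
      = (Complex.cosh (2*γ) - Complex.cos (2*z))/2 := by
  rw [show Complex.I*γ = γ*Complex.I by ring, Complex.sin_add, Complex.sin_sub,
    Complex.sin_mul_I, Complex.cos_mul_I, Complex.cosh_two_mul, Complex.cos_two_mul]
  have h1 := Complex.sin_sq_add_cos_sq z
  have h2 := Complex.cosh_sq_sub_sinh_sq γ
  have h3 := Complex.I_sq
  linear_combination (Complex.cosh γ^2) * h1 + (1/2 - Complex.cos z^2) * h2 +
    (-(Complex.cos z^2)*Complex.sinh γ^2) * h3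

theorem phiP_real {ζ : ℝ} (hζ : 0 < ζ) (β : ℝ) :
    phiP (β:ℂ) (ζ/2) = ((2*Real.sinh ζ / (Real.cosh ζ - Real.cos (2*β)) : ℝ) : ℂ) := by
  rw [phiP, sin_mul_sin', show (2:ℂ) * ((ζ/2:ℝ):ℂ) = ((ζ:ℝ):ℂ) by push_cast; ring]
  rw [show (2:ℂ) * (β:ℂ) = ((2*β : ℝ):ℂ) by push_cast; ring]
  rw [← Complex.ofReal_cosh, ← Complex.ofReal_cos, ← Complex.ofReal_sinh]
  push_cast
  rw [div_div_eq_mul_div]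
  ring

theorem denom_pos {ζ : ℝ} (hζ : 0 < ζ) (β : ℝ) : 0 < Real.cosh ζ - Real.cos (2*β) := by
  have h1 : 1 < Real.cosh ζ := Real.one_lt_cosh.mpr (ne_of_gt hζ)
  have h2 : Real.cos (2*β) ≤ 1 := Real.cos_le_one _
  linarith

theorem phiP_bound {ζ : ℝ} (hζ : 0 < ζ) (β : ℝ) :
    ‖phiP (β:ℂ) (ζ/2)‖ ≤ 2*Real.sinh ζ / (Real.cosh ζ - 1) := by
  rw [phiP_real hζ β, Complex.norm_real, Real.norm_eq_abs, abs_div]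
  have h1 : 1 < Real.cosh ζ := Real.one_lt_cosh.mpr (ne_of_gt hζ)
  have h2 : Real.cos (2*β) ≤ 1 := Real.cos_le_one _
  have h3 := denom_pos hζ β
  have hs : 0 < Real.sinh ζ := Real.sinh_pos_iff.mpr hζ
  rw [_root_.abs_of_nonneg (by positivity : (0:ℝ) ≤ 2*Real.sinh ζ), _root_.abs_of_pos h3]
  apply div_le_div_of_nonneg_left (by positivity) (by linarith) (by linarith)

theorem phiP_cont {ζ : ℝ} (hζ : 0 < ζ) : Continuous (fun β : ℝ => phiP (β:ℂ) (ζ/2)) := by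
  have : (fun β : ℝ => phiP (β:ℂ) (ζ/2))
      = fun β : ℝ => ((2*Real.sinh ζ / (Real.cosh ζ - Real.cos (2*β)) : ℝ) : ℂ) :=
    funext (phiP_real hζ)
  rw [this]
  apply Complex.continuous_ofReal.comp
  apply Continuous.div continuous_const (by continuity)
  exact fun β => ne_of_gt (denom_pos hζ β)

theorem abs_cos_le (z : ℂ) : ‖Complex.cos z‖ ≤ Real.exp |z.im| := by
  rw [Complex.cos]
  calc ‖(Complex.exp (z*Complex.I) + Complex.exp (-z*Complex.I))/2‖
      = ‖Complex.exp (z*Complex.I) + Complex.exp (-z*Complex.I)‖/2 := by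
        rw [norm_div]; norm_num
    _ ≤ (‖Complex.exp (z*Complex.I)‖ + ‖Complex.exp (-z*Complex.I)‖)/2 := by
        gcongr; exact norm_add_le _ _
    _ ≤ Real.exp |z.im| := by
        rw [Complex.norm_exp, Complex.norm_exp]
        have e1 : (z*Complex.I).re = -z.im := by simp [Complex.mul_re]
        have e2 : (-z*Complex.I).re = z.im := by simp [Complex.mul_re]
        rw [e1, e2]
        have := abs_le.mp (le_refl |z.im|)
        have g1 : Real.exp (-z.im) ≤ Real.exp |z.im| := Real.exp_le_exp.mpr (by cases abs_cases z.im <;> linarith)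
        have g2 : Real.exp (z.im) ≤ Real.exp |z.im| := Real.exp_le_exp.mpr (le_abs_self _)
        linarith

theorem cosh_ge (x : ℝ) : Real.exp |x| / 2 ≤ Real.cosh x := by
  rw [Real.cosh_eq]
  cases abs_cases x with
  | inl h => rw [h.1]; have := Real.exp_pos (-x); linarith
  | inr h => rw [h.1]; have := Real.exp_pos x; linarith

theorem int_exp (m : ℤ) : (∫ β in Set.Ioc (-(Real.pi/2)) (Real.pi/2), Complex.exp (2*Complex.I*m*β))
    = if m = 0 then (Real.pi:ℂ) else 0 := by
  have hle : (-(Real.pi/2):ℝ) ≤ Real.pi/2 := by linarith [Real.pi_pos]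
  rw [← intervalIntegral.integral_of_le hle]
  rcases eq_or_ne m 0 with rfl | hm
  · simp [intervalIntegral.integral_const]
  · have hc : (2*Complex.I*(m:ℂ)) ≠ 0 := by
      simp [Complex.I_ne_zero, Complex.ext_iff]
      exact_mod_cast hm
    rw [if_neg hm]
    have := integral_exp_mul_complex (a := -(Real.pi/2)) (b := Real.pi/2) hc
    rw [this]
    have e1 : Complex.exp (2*Complex.I*(m:ℂ)*((Real.pi/2:ℝ):ℂ)) = (-1:ℂ)^m := by
      rw [show 2*Complex.I*(m:ℂ)*((Real.pi/2:ℝ):ℂ) = (m:ℂ)*((Real.pi:ℝ)*Complex.I) by push_cast; ring,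
        Complex.exp_int_mul, Complex.exp_pi_mul_I]
    have e2 : Complex.exp (2*Complex.I*(m:ℂ)*((-(Real.pi/2):ℝ):ℂ)) = ((-1:ℂ)^m)⁻¹ := by
      rw [show 2*Complex.I*(m:ℂ)*((-(Real.pi/2):ℝ):ℂ) = (-m:ℂ)*((Real.pi:ℝ)*Complex.I) by push_cast; ring]
      rw [show (-m:ℂ) = ((-m:ℤ):ℂ) by push_cast; ring, Complex.exp_int_mul, Complex.exp_pi_mul_I,
        zpow_neg]
    have e3 : ((-1:ℂ)^m)⁻¹ = (-1:ℂ)^m := by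
      rw [← inv_zpow, inv_neg, inv_one]
    rw [e1, e2, e3, sub_self, zero_div]
theorem hasSum_phi {ζ : ℝ} (hζ : 0 < ζ) (z : ℂ) (hz : |z.im| < ζ/2) :
    HasSum (fun k : ℤ => 2 * (Real.exp (-|(k:ℝ)| * ζ) : ℂ) * Complex.exp (2*Complex.I*k*z))
      (phiP z (ζ/2)) := by
  have him1 : -(ζ/2) < z.im := (abs_lt.mp hz).1
  have him2 : z.im < ζ/2 := (abs_lt.mp hz).2
  set w : ℂ := Complex.exp (2*Complex.I*z) with hw
  set A : ℂ := Complex.exp (-(ζ:ℂ) + 2*Complex.I*z) with hA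
  set B : ℂ := Complex.exp (-(ζ:ℂ) - 2*Complex.I*z) with hB
  have hAnorm : ‖A‖ < 1 := by
    rw [hA, Complex.norm_exp]
    rw [Real.exp_lt_one_iff]
    simp [Complex.add_re, Complex.mul_re]
    nlinarith
  have hBnorm : ‖B‖ < 1 := by
    rw [hB, Complex.norm_exp]
    rw [Real.exp_lt_one_iff]
    simp [Complex.sub_re, Complex.mul_re]
    nlinarith
  have h1 : HasSum (fun n : ℕ => 2 * A^n) (2*(1-A)⁻¹) :=
    (hasSum_geometric_of_norm_lt_one hAnorm).mul_left 2
  have h2 : HasSum (fun n : ℕ => (2*B) * B^n) (2*B*(1-B)⁻¹) :=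
    (hasSum_geometric_of_norm_lt_one hBnorm).mul_left (2*B)
  have key : HasSum (fun k : ℤ => 2 * (Real.exp (-|(k:ℝ)| * ζ) : ℂ) * Complex.exp (2*Complex.I*k*z))
      (2*(1-A)⁻¹ + 2*B*(1-B)⁻¹) := by
    apply HasSum.of_nat_of_neg_add_one
    · convert h1 using 2 with n
      rw [hA, ← Complex.exp_nat_mul, Complex.ofReal_exp, mul_assoc, ← Complex.exp_add]
      congr 2
      push_cast [Nat.abs_cast]
      ring
    · convert h2 using 2 with n
      rw [hB, show (2:ℂ)*B*B^n = 2*(B^n*B) by ring, ← pow_succ, ← Complex.exp_nat_mul,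
        Complex.ofReal_exp, mul_assoc, ← Complex.exp_add]
      congr 2
      have habs : |((-((n:ℤ)+1) : ℤ) : ℝ)| = (n:ℝ)+1 := by
        push_cast; rw [abs_neg]; exact _root_.abs_of_nonneg (by positivity)
      rw [habs]
      push_cast
      ring
  have hval : 2*(1-A)⁻¹ + 2*B*(1-B)⁻¹ = phiP z (ζ/2) := by
    have hA1 : (1:ℂ) - A ≠ 0 := by
      intro h; apply absurd hAnorm; simp [show A = 1 by linear_combination -h]
    have hB1 : (1:ℂ) - B ≠ 0 := by
      intro h; apply absurd hBnorm; simp [show B = 1 by linear_combination -h]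
    have ha : Complex.exp (ζ:ℂ) ≠ 0 := Complex.exp_ne_zero _
    have hw0 : w ≠ 0 := Complex.exp_ne_zero _
    rw [phiP, show ((ζ/2 : ℝ) : ℂ) = (ζ:ℂ)/2 by push_cast; ring, sin_mul_sin']
    rw [show (2:ℂ) * ((ζ:ℂ)/2) = (ζ:ℂ) by ring]
    rw [Complex.cosh, Complex.sinh, Complex.cos]
    have e1 : Complex.exp (2*z*Complex.I) = w := by
      rw [hw]; congr 1; ring
    have e2 : Complex.exp (-(2*z)*Complex.I) = w⁻¹ := by
      rw [hw, ← Complex.exp_neg]; congr 1; ring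
    have e3 : A = Complex.exp (-(ζ:ℂ)) * w := by
      rw [hA, hw, Complex.exp_add]
    have e4 : B = Complex.exp (-(ζ:ℂ)) * w⁻¹ := by
      rw [hB, hw, ← Complex.exp_neg, ← Complex.exp_add]
      exact congrArg Complex.exp (by ring)
    have e5 : Complex.exp (-(ζ:ℂ)) = (Complex.exp (ζ:ℂ))⁻¹ := Complex.exp_neg _
    rw [e1, e2, e3, e4, e5]
    have h1A : (1:ℂ) - (cexp (ζ:ℂ))⁻¹ * w ≠ 0 := by rw [← e5, ← e3]; exact hA1
    have h1B : (1:ℂ) - (cexp (ζ:ℂ))⁻¹ * w⁻¹ ≠ 0 := by rw [← e5, ← e4]; exact hB1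
    have hne1 : cexp (ζ:ℂ) - w ≠ 0 := by
      have : cexp (ζ:ℂ) - w = cexp (ζ:ℂ) * (1 - (cexp (ζ:ℂ))⁻¹ * w) := by field_simp
      rw [this]; exact mul_ne_zero ha h1A
    have hne2 : cexp (ζ:ℂ) * w - 1 ≠ 0 := by
      have : cexp (ζ:ℂ) * w - 1 = (cexp (ζ:ℂ) * w) * (1 - (cexp (ζ:ℂ))⁻¹ * w⁻¹) := by field_simp
      rw [this]; exact mul_ne_zero (mul_ne_zero ha hw0) h1B
    have hd : (cexp (ζ:ℂ) + (cexp (ζ:ℂ))⁻¹)/2 - (w+w⁻¹)/2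
        = ((cexp (ζ:ℂ) - w)*(cexp (ζ:ℂ)*w - 1))/(2*cexp (ζ:ℂ)*w) := by
      field_simp; ring
    rw [hd]
    field_simp
    ring
  rwa [hval] at key

theorem summable_geom_int {q : ℝ} (h0 : 0 ≤ q) (h1 : q < 1) :
    Summable (fun k : ℤ => q^(k.natAbs)) := by
  apply Summable.of_nat_of_neg
  · simpa using summable_geometric_of_lt_one h0 h1
  · simpa using summable_geometric_of_lt_one h0 h1

theorem summable_of_geom_bound {f : ℤ → ℂ} {C q : ℝ} (h0 : 0 ≤ q) (h1 : q < 1)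
    (hb : ∀ k, ‖f k‖ ≤ C * q^(k.natAbs)) : Summable f :=
  Summable.of_norm (Summable.of_nonneg_of_le (fun k => norm_nonneg _) hb
    ((summable_geom_int h0 h1).mul_left C))

theorem exp_abs_eq {ζ : ℝ} (k : ℤ) : Real.exp (-|(k:ℝ)| * ζ) = Real.exp (-ζ)^(k.natAbs) := by
  rw [← Real.exp_nat_mul]
  congr 1
  rw [Nat.cast_natAbs]
  push_cast
  ring

theorem hI {ζ : ℝ} (hζ : 0 < ζ) (k : ℤ) :
    (∫ β in Set.Ioc (-(Real.pi/2)) (Real.pi/2),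
        phiP (β:ℂ) (ζ/2) * Complex.exp (2*Complex.I*(k:ℂ)*(β:ℂ)))
      = 2*(Real.pi:ℂ)*(Real.exp (-|(k:ℝ)| * ζ):ℂ) := by
  set F : ℤ → ℝ → ℂ := fun n β =>
    2 * (Real.exp (-|(n:ℝ)| * ζ) : ℂ) * Complex.exp (2*Complex.I*(n:ℂ)*(β:ℂ))
      * Complex.exp (2*Complex.I*(k:ℂ)*(β:ℂ)) with hF
  have hpt : ∀ β : ℝ, phiP (β:ℂ) (ζ/2) * Complex.exp (2*Complex.I*(k:ℂ)*(β:ℂ))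
      = ∑' n : ℤ, F n β := by
    intro β
    exact (((hasSum_phi hζ (β:ℂ) (by simp; positivity)).mul_right
      (Complex.exp (2*Complex.I*(k:ℂ)*(β:ℂ)))).tsum_eq).symm
  have hcont : ∀ n : ℤ, Continuous (F n) := by
    intro n
    apply Continuous.mul
    apply Continuous.mul continuous_const
    · exact (Complex.continuous_exp.comp (by continuity))
    · exact (Complex.continuous_exp.comp (by continuity))
  have hnorm : ∀ n : ℤ, ∀ β : ℝ, ‖F n β‖ = 2 * Real.exp (-|(n:ℝ)| * ζ) := by
    intro n β
    rw [hF]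
    simp only [norm_mul, Complex.norm_exp, Complex.norm_real]
    have r1 : (2*Complex.I*(n:ℂ)*(β:ℂ)).re = 0 := by simp [Complex.mul_re]
    have r2 : (2*Complex.I*(k:ℂ)*(β:ℂ)).re = 0 := by simp [Complex.mul_re]
    rw [r1, r2]
    simp [_root_.abs_of_nonneg (Real.exp_nonneg _)]
  have hInt : ∀ n : ℤ, Integrable (F n) (volume.restrict (Set.Ioc (-(Real.pi/2)) (Real.pi/2))) :=
    fun n => (hcont n).integrableOn_Ioc
  have hSum : Summable (fun n : ℤ =>
      ∫ β in Set.Ioc (-(Real.pi/2)) (Real.pi/2), ‖F n β‖) := by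
    have heval : ∀ n : ℤ, (∫ β in Set.Ioc (-(Real.pi/2)) (Real.pi/2), ‖F n β‖)
        = Real.pi * (2 * Real.exp (-|(n:ℝ)| * ζ)) := by
      intro n
      rw [show (fun β : ℝ => ‖F n β‖) = fun _ : ℝ => 2 * Real.exp (-|(n:ℝ)| * ζ) from
        funext (hnorm n)]
      rw [setIntegral_const, measureReal_def, Real.volume_Ioc, smul_eq_mul]
      congr 1
      rw [ENNReal.toReal_ofReal (by linarith [Real.pi_pos])]
      ring
    rw [funext heval]
    apply Summable.mul_left
    apply Summable.mul_left
    have : ∀ n : ℤ, Real.exp (-|(n:ℝ)| * ζ) = Real.exp (-ζ)^(n.natAbs) := exp_abs_eq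
    rw [funext this]
    exact summable_geom_int (Real.exp_nonneg _) (Real.exp_lt_one_iff.mpr (by linarith))
  have hexch := integral_tsum_of_summable_integral_norm hInt hSum
  rw [show (fun β : ℝ => phiP (β:ℂ) (ζ/2) * Complex.exp (2*Complex.I*(k:ℂ)*(β:ℂ)))
      = fun β : ℝ => ∑' n : ℤ, F n β from funext hpt]
  rw [← hexch]
  have hterm : ∀ n : ℤ, (∫ β in Set.Ioc (-(Real.pi/2)) (Real.pi/2), F n β)
      = 2 * (Real.exp (-|(n:ℝ)| * ζ) : ℂ) * (if n + k = 0 then (Real.pi:ℂ) else 0) := by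
    intro n
    have e1 : ∀ β : ℝ, F n β = (2 * (Real.exp (-|(n:ℝ)| * ζ) : ℂ)) *
        Complex.exp (2*Complex.I*(((n+k:ℤ)):ℂ)*(β:ℂ)) := by
      intro β
      simp only [hF]
      rw [mul_assoc (2 * ((Real.exp (-|(n:ℝ)| * ζ) : ℝ) : ℂ)), ← Complex.exp_add]
      congr 2
      push_cast
      ring
    rw [funext e1, MeasureTheory.integral_const_mul, int_exp (n+k), mul_assoc]
  rw [tsum_congr hterm]
  rw [tsum_eq_single (-k) (by
    intro n hn
    rw [if_neg (by omega), mul_zero])]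
  rw [if_pos (by omega)]
  have : |((-k : ℤ) : ℝ)| = |(k:ℝ)| := by push_cast; rw [abs_neg]
  rw [this]
  ring

/-- Dressed energy of a close excitation: for `ζ > 0` and `|Im μ| < ζ/2`,
`φ'(μ,ζ/2) + (1/(2π)) ∫_{−π/2}^{π/2} φ'(β,ζ/2) u_μ(β) dβ = Σ_{k∈ℤ} e^{2ikμ}/cosh(kζ)`;
equivalently, `ε(μ) = −2 sinh(ζ) [φ'(μ,ζ/2) + (1/(2π)) ∫ φ'(·,ζ/2) u_μ] = −2π sinh(ζ) ρ(μ)`. -/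
theorem close_excitation_dressed_energy
    (ζ : ℝ) (hζ : 0 < ζ) (μ : ℂ) (hμ : |μ.im| < ζ / 2) :
    (phiP μ (ζ / 2) +
        (1 / (2 * (Real.pi : ℂ))) *
          ∫ β in (-(Real.pi / 2))..(Real.pi / 2), phiP (β : ℂ) (ζ / 2) * uFun ζ μ β
      = ∑' k : ℤ, Complex.exp (2 * Complex.I * k * μ) / Complex.cosh (k * (ζ : ℂ))) ∧
    -2 * (Real.sinh ζ : ℂ) *
        (phiP μ (ζ / 2) +
          (1 / (2 * (Real.pi : ℂ))) *
            ∫ β in (-(Real.pi / 2))..(Real.pi / 2), phiP (β : ℂ) (ζ / 2) * uFun ζ μ β)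
      = -2 * (Real.pi : ℂ) * (Real.sinh ζ : ℂ) * rho ζ μ := by
  classical
  have hπ : (0:ℝ) < Real.pi := Real.pi_pos
  have hπC : ((Real.pi : ℝ) : ℂ) ≠ 0 := by exact_mod_cast Real.pi_ne_zero
  have hle : (-(Real.pi/2) : ℝ) ≤ Real.pi/2 := by linarith
  set S := Set.Ioc (-(Real.pi/2)) (Real.pi/2) with hS
  set q : ℝ := Real.exp (-(ζ - 2*|μ.im|)) with hqdef
  have hq0 : 0 ≤ q := Real.exp_nonneg _
  have hq1 : q < 1 := Real.exp_lt_one_iff.mpr (by cases abs_cases μ.im <;> linarith)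
  -- coefficients of uFun
  set c : ℤ → ℂ := fun k =>
    -((Real.exp (-|(k:ℝ)| * ζ) : ℂ) * Complex.cos (2 * (k:ℂ) * μ)
      / Complex.cosh ((k:ℂ) * (ζ:ℂ))) with hcdef
  -- norms of cosh
  have hcosh_norm : ∀ k : ℤ, ‖Complex.cosh ((k:ℂ) * (ζ:ℂ))‖ = Real.cosh ((k:ℝ)*ζ) := by
    intro k
    rw [show (k:ℂ)*(ζ:ℂ) = (((k:ℝ)*ζ : ℝ):ℂ) by push_cast; ring, ← Complex.ofReal_cosh,
      Complex.norm_real, Real.norm_eq_abs, _root_.abs_of_pos (Real.cosh_pos _)]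
  have hcosh_ge1 : ∀ k : ℤ, 1 ≤ Real.cosh ((k:ℝ)*ζ) := fun k => Real.one_le_cosh _
  have hcosh_ne : ∀ k : ℤ, Complex.cosh ((k:ℂ) * (ζ:ℂ)) ≠ 0 := by
    intro k
    rw [← norm_ne_zero_iff, hcosh_norm k]
    have := hcosh_ge1 k; linarith
  have habs_nat : ∀ k : ℤ, |(k:ℝ)| = (k.natAbs : ℝ) := by
    intro k; rw [Nat.cast_natAbs]; push_cast; ring
  have hinv_cosh : ∀ k : ℤ, 1/Real.cosh ((k:ℝ)*ζ) ≤ 2 * Real.exp (-ζ)^(k.natAbs) := by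
    intro k
    have h1 : Real.exp ((k.natAbs:ℝ)*ζ)/2 ≤ Real.cosh ((k:ℝ)*ζ) := by
      have := cosh_ge ((k:ℝ)*ζ)
      rwa [abs_mul, _root_.abs_of_pos hζ, habs_nat k] at this
    have h2 : (0:ℝ) < Real.exp ((k.natAbs:ℝ)*ζ)/2 := by positivity
    calc 1/Real.cosh ((k:ℝ)*ζ) ≤ 1/(Real.exp ((k.natAbs:ℝ)*ζ)/2) :=
          one_div_le_one_div_of_le h2 h1
      _ = 2 * Real.exp (-ζ)^(k.natAbs) := by
          rw [one_div_div, ← Real.exp_nat_mul,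
            show ((k.natAbs:ℝ))*(-ζ) = -((k.natAbs:ℝ)*ζ) by ring, Real.exp_neg, div_eq_mul_inv]
  have hcos_b : ∀ k : ℤ, ‖Complex.cos (2 * (k:ℂ) * μ)‖ ≤ Real.exp (2*|μ.im|)^(k.natAbs) := by
    intro k
    have h1 := abs_cos_le (2 * (k:ℂ) * μ)
    have h2 : (2 * (k:ℂ) * μ).im = 2 * (k:ℝ) * μ.im := by
      simp [Complex.mul_im, Complex.mul_re]
    rw [h2] at h1
    refine h1.trans ?_
    rw [← Real.exp_nat_mul]
    apply Real.exp_le_exp.mpr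
    rw [abs_mul, abs_mul, habs_nat k]
    rw [_root_.abs_of_nonneg (by norm_num : (0:ℝ) ≤ 2)]
    nlinarith [abs_nonneg μ.im, (k.natAbs:ℝ) ≥ 0]
  have hq_split : ∀ n : ℕ, q^n = Real.exp (-ζ)^n * Real.exp (2*|μ.im|)^n := by
    intro n
    rw [← mul_pow]
    congr 1
    rw [← Real.exp_add, hqdef]
    congr 1
    ring
  have hc_b : ∀ k : ℤ, ‖c k‖ ≤ q^(k.natAbs) := by
    intro k
    have heq : ‖c k‖ = Real.exp (-ζ)^(k.natAbs) * ‖Complex.cos (2 * (k:ℂ) * μ)‖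
        / Real.cosh ((k:ℝ)*ζ) := by
      rw [hcdef]
      simp only [norm_neg, norm_div, norm_mul, Complex.norm_real, Real.norm_eq_abs]
      rw [_root_.abs_of_nonneg (Real.exp_nonneg _), hcosh_norm, exp_abs_eq]
    rw [heq, hq_split]
    have h3 := hcos_b k
    have h4 := hcosh_ge1 k
    have h5 : (0:ℝ) ≤ Real.exp (-ζ)^(k.natAbs) := by positivity
    calc Real.exp (-ζ)^(k.natAbs) * ‖Complex.cos (2 * (k:ℂ) * μ)‖ / Real.cosh ((k:ℝ)*ζ)
        ≤ Real.exp (-ζ)^(k.natAbs) * Real.exp (2*|μ.im|)^(k.natAbs) / 1 := by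
          gcongr
      _ = Real.exp (-ζ)^(k.natAbs) * Real.exp (2*|μ.im|)^(k.natAbs) := by rw [div_one]
  have hsc : Summable (fun k : ℤ => ‖c k‖) :=
    Summable.of_nonneg_of_le (fun _ => norm_nonneg _) hc_b (summable_geom_int hq0 hq1)
  -- uFun as a series
  have hu : ∀ β : ℝ, uFun ζ μ β = ∑' k : ℤ, c k * Complex.exp (2*Complex.I*(k:ℂ)*(β:ℂ)) := by
    intro β
    rw [uFun, ← tsum_neg]
    apply tsum_congr
    intro k
    simp only [neg_mul, hcdef]
    ring
  have hprod : ∀ β : ℝ, phiP (β:ℂ) (ζ/2) * uFun ζ μ β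
      = ∑' k : ℤ, c k * (phiP (β:ℂ) (ζ/2) * Complex.exp (2*Complex.I*(k:ℂ)*(β:ℂ))) := by
    intro β
    rw [hu β, ← tsum_mul_left]
    apply tsum_congr
    intro k
    ring
  set G : ℤ → ℝ → ℂ := fun k β =>
    c k * (phiP (β:ℂ) (ζ/2) * Complex.exp (2*Complex.I*(k:ℂ)*(β:ℂ))) with hG
  have hGint : ∀ k : ℤ, Integrable (G k) (volume.restrict S) := by
    intro k
    apply Continuous.integrableOn_Ioc
    apply continuous_const.mul
    exact (phiP_cont hζ).mul (Complex.continuous_exp.comp (by fun_prop))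
  set M : ℝ := 2*Real.sinh ζ / (Real.cosh ζ - 1) with hM
  have hM0 : 0 ≤ M := by
    have h1 : 1 < Real.cosh ζ := Real.one_lt_cosh.mpr (ne_of_gt hζ)
    have h2 : 0 < Real.sinh ζ := Real.sinh_pos_iff.mpr hζ
    rw [hM]
    apply div_nonneg <;> linarith
  have hGnorm : ∀ k : ℤ, ∀ β : ℝ, ‖G k β‖ ≤ ‖c k‖ * M := by
    intro k β
    rw [hG]
    simp only [norm_mul]
    have h1 : ‖Complex.exp (2*Complex.I*(k:ℂ)*(β:ℂ))‖ = 1 := by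
      rw [Complex.norm_exp]
      have : (2*Complex.I*(k:ℂ)*(β:ℂ)).re = 0 := by simp [Complex.mul_re]
      rw [this, Real.exp_zero]
    rw [h1, mul_one]
    exact mul_le_mul_of_nonneg_left (phiP_bound hζ β) (norm_nonneg _)
  have hGnormInt : ∀ k : ℤ, (∫ β in S, ‖G k β‖) ≤ Real.pi * (‖c k‖ * M) := by
    intro k
    have hint1 : Integrable (fun β : ℝ => ‖G k β‖) (volume.restrict S) := (hGint k).norm
    have hint2 : Integrable (fun _ : ℝ => ‖c k‖ * M) (volume.restrict S) := by
      apply (integrableOn_const_iff (C := ‖c k‖ * M)).mpr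
      right
      rw [hS, Real.volume_Ioc]
      exact ENNReal.ofReal_lt_top
    calc (∫ β in S, ‖G k β‖) ≤ ∫ _ in S, ‖c k‖ * M := integral_mono hint1 hint2 (hGnorm k)
      _ = Real.pi * (‖c k‖ * M) := by
        rw [setIntegral_const, hS, measureReal_def, Real.volume_Ioc, smul_eq_mul]
        congr 1
        rw [ENNReal.toReal_ofReal (by linarith)]
        ring
  have hGsum : Summable (fun k : ℤ => ∫ β in S, ‖G k β‖) := by
    apply Summable.of_nonneg_of_le
      (fun k => integral_nonneg (fun β => norm_nonneg _)) hGnormInt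
    exact (hsc.mul_right M).mul_left Real.pi
  have hexch := integral_tsum_of_summable_integral_norm hGint hGsum
  have hIeq : ∀ k : ℤ, (∫ β in S, G k β)
      = c k * (2*(Real.pi:ℂ)*(Real.exp (-|(k:ℝ)| * ζ):ℂ)) := by
    intro k
    rw [hG]
    rw [MeasureTheory.integral_const_mul]
    rw [hS, hI hζ k]
  have hIntMain : (∫ β in (-(Real.pi/2))..(Real.pi/2), phiP (β:ℂ) (ζ/2) * uFun ζ μ β)
      = ∑' k : ℤ, c k * (2*(Real.pi:ℂ)*(Real.exp (-|(k:ℝ)| * ζ):ℂ)) := by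
    rw [intervalIntegral.integral_of_le hle, ← hS]
    rw [show (fun β : ℝ => phiP (β:ℂ) (ζ/2) * uFun ζ μ β)
        = fun β : ℝ => ∑' k : ℤ, G k β from funext hprod]
    rw [← hexch]
    exact tsum_congr hIeq
  -- the three series
  set f : ℤ → ℂ := fun k =>
    2 * (Real.exp (-|(k:ℝ)| * ζ) : ℂ) * Complex.exp (2*Complex.I*(k:ℂ)*μ) with hf
  have hphiμ : HasSum f (phiP μ (ζ/2)) := hasSum_phi hζ μ hμ
  have hf_sum : Summable f := hphiμ.summable
  set g : ℤ → ℂ := fun k => c k * (Real.exp (-|(k:ℝ)| * ζ) : ℂ) with hg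
  have hg_sum : Summable g := by
    apply summable_of_geom_bound (C := 1) hq0 hq1
    intro k
    simp only [hg, norm_mul, Complex.norm_real, Real.norm_eq_abs, one_mul]
    rw [_root_.abs_of_nonneg (Real.exp_nonneg _)]
    calc ‖c k‖ * Real.exp (-|(k:ℝ)| * ζ) ≤ q^(k.natAbs) * 1 := by
          apply mul_le_mul (hc_b k) _ (Real.exp_nonneg _) (by positivity)
          apply Real.exp_le_one_iff.mpr
          simp
          positivity
      _ = q^(k.natAbs) := mul_one _
  set h : ℤ → ℂ := fun k =>
    Complex.exp (2 * Complex.I * (k:ℂ) * μ) / Complex.cosh ((k:ℂ) * (ζ:ℂ)) with hh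
  have hexp_b : ∀ k : ℤ, ‖Complex.exp (2*Complex.I*(k:ℂ)*μ)‖ ≤ Real.exp (2*|μ.im|)^(k.natAbs) := by
    intro k
    rw [Complex.norm_exp, ← Real.exp_nat_mul]
    apply Real.exp_le_exp.mpr
    have hre : (2*Complex.I*(k:ℂ)*μ).re = -(2*(k:ℝ)*μ.im) := by
      simp [Complex.mul_re, Complex.mul_im]
    rw [hre]
    calc -(2*(k:ℝ)*μ.im) ≤ |2*(k:ℝ)*μ.im| := neg_le_abs _
      _ = (k.natAbs:ℝ) * (2*|μ.im|) := by
          rw [abs_mul, abs_mul, _root_.abs_of_nonneg (by norm_num : (0:ℝ) ≤ 2), habs_nat k]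
          ring
  have hh_sum : Summable h := by
    apply summable_of_geom_bound (C := 2) hq0 hq1
    intro k
    simp only [hh, norm_div]
    rw [hcosh_norm, div_eq_mul_one_div]
    calc ‖Complex.exp (2*Complex.I*(k:ℂ)*μ)‖ * (1/Real.cosh ((k:ℝ)*ζ))
        ≤ Real.exp (2*|μ.im|)^(k.natAbs) * (2*Real.exp (-ζ)^(k.natAbs)) := by
          apply mul_le_mul (hexp_b k) (hinv_cosh k)
            (one_div_nonneg.mpr (le_of_lt (Real.cosh_pos _))) (by positivity)
      _ = 2 * q^(k.natAbs) := by rw [hq_split]; ring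
  set t : ℤ → ℂ := fun k =>
    (Real.exp (-|(k:ℝ)| * ζ):ℂ)^2 *
      (Complex.exp (2*Complex.I*(k:ℂ)*μ) - Complex.exp (-(2*Complex.I*(k:ℂ)*μ)))
      / (2*Complex.cosh ((k:ℂ)*(ζ:ℂ))) with ht
  have hkeyR : ∀ k : ℤ, 2*Real.exp (-|(k:ℝ)| * ζ) * Real.cosh ((k:ℝ)*ζ)
      = 1 + Real.exp (-|(k:ℝ)| * ζ)^2 := by
    intro k
    have hE := Real.exp_ne_zero ((k:ℝ)*ζ)
    rcases abs_cases (k:ℝ) with hcase | hcase <;>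
      rw [hcase.1, Real.cosh_eq] <;> simp only [neg_mul, neg_neg, Real.exp_neg] <;>
      field_simp <;> ring
  have hkeyC : ∀ k : ℤ, 2*((Real.exp (-|(k:ℝ)| * ζ):ℝ):ℂ) * Complex.cosh ((k:ℂ)*(ζ:ℂ))
      = 1 + ((Real.exp (-|(k:ℝ)| * ζ):ℝ):ℂ)^2 := by
    intro k
    rw [show (k:ℂ)*(ζ:ℂ) = (((k:ℝ)*ζ:ℝ):ℂ) by push_cast; ring, ← Complex.ofReal_cosh]
    exact_mod_cast hkeyR k
  have hcos_ex : ∀ k : ℤ, Complex.cos (2*(k:ℂ)*μ)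
      = (Complex.exp (2*Complex.I*(k:ℂ)*μ) + Complex.exp (-(2*Complex.I*(k:ℂ)*μ)))/2 := by
    intro k
    rw [Complex.cos, show 2*(k:ℂ)*μ*Complex.I = 2*Complex.I*(k:ℂ)*μ by ring,
      show -(2*(k:ℂ)*μ)*Complex.I = -(2*Complex.I*(k:ℂ)*μ) by ring]
  have hfg : ∀ k : ℤ, f k + g k = h k + t k := by
    intro k
    have hcne := hcosh_ne k
    have hkey := hkeyC k
    simp only [hf, hg, hh, ht, hcdef]
    rw [hcos_ex k]
    set a : ℂ := ((Real.exp (-|(k:ℝ)| * ζ):ℝ):ℂ) with ha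
    set E : ℂ := Complex.exp (2*Complex.I*(k:ℂ)*μ) with hEdef
    set E' : ℂ := Complex.exp (-(2*Complex.I*(k:ℂ)*μ)) with hE'def
    set C : ℂ := Complex.cosh ((k:ℂ)*(ζ:ℂ)) with hCdef
    field_simp
    linear_combination (2*E) * hkey
  have ht_sum : Summable t := by
    apply Summable.congr ((hf_sum.add hg_sum).sub hh_sum)
    intro k
    show f k + g k - h k = t k
    rw [hfg k]
    ring
  have ht_odd : ∀ k : ℤ, t (-k) = - t k := by
    intro k
    simp only [ht]
    rw [show |((-k:ℤ):ℝ)| = |(k:ℝ)| by push_cast; exact abs_neg _,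
      show ((-k:ℤ):ℂ) = -(k:ℂ) by push_cast; ring,
      show 2*Complex.I*(-(k:ℂ))*μ = -(2*Complex.I*(k:ℂ)*μ) by ring,
      show -(-(2*Complex.I*(k:ℂ)*μ)) = 2*Complex.I*(k:ℂ)*μ by ring,
      show (-(k:ℂ))*(ζ:ℂ) = -((k:ℂ)*(ζ:ℂ)) by ring, Complex.cosh_neg]
    ring
  have ht_zero : ∑' k : ℤ, t k = 0 := by
    have h1 : ∑' k : ℤ, t (-k) = ∑' k : ℤ, t k := by
      simpa only [Equiv.neg_apply] using (Equiv.neg ℤ).tsum_eq t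
    have h3 : ∑' k : ℤ, t k = - ∑' k : ℤ, t k :=
      calc ∑' k : ℤ, t k = ∑' k : ℤ, t (-k) := h1.symm
        _ = ∑' k : ℤ, -t k := tsum_congr ht_odd
        _ = - ∑' k : ℤ, t k := tsum_neg
    have h4 : (2:ℂ) * ∑' k : ℤ, t k = 0 := by linear_combination h3
    exact (mul_eq_zero.mp h4).resolve_left two_ne_zero
  have key1 : phiP μ (ζ / 2) +
      (1 / (2 * (Real.pi : ℂ))) *
        ∫ β in (-(Real.pi / 2))..(Real.pi / 2), phiP (β : ℂ) (ζ / 2) * uFun ζ μ β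
      = ∑' k : ℤ, h k := by
    rw [hIntMain, ← hphiμ.tsum_eq, ← tsum_mul_left]
    have hgg : ∀ k : ℤ, (1/(2*(Real.pi:ℂ))) * (c k * (2*(Real.pi:ℂ)*(Real.exp (-|(k:ℝ)| * ζ):ℂ)))
        = g k := by
      intro k
      simp only [hg]
      field_simp
    rw [tsum_congr hgg, ← hf_sum.tsum_add hg_sum, tsum_congr hfg,
      hh_sum.tsum_add ht_sum, ht_zero, add_zero]
  constructor
  · exact key1
  · rw [key1, rho]
    field_simp
    ring
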